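/- Let g : [ℓ,u] → ℝ be a bounded L_g-Lipschitz function and f : [ℓ,u] → ℝ a bounded L_f-Lipschitz function. Let a, x ∈ ℝ^I sample them on the uniform grid with I ≥ 2 points: a[i] = g(t[i]) and x[i] = f(t[i]). Set L_{fg} = L_f·‖g‖_∞ + L_g·‖f‖_∞. If ⟨a, x⟩ = b, then the dyadic coarsenings satisfy: |⟨ā, x̄⟩ − b/2| ≤ (1/4)·L_{fg}·(u−ℓ)·I/(I−1) when I is even, and |⟨ā, x̄⟩ − ((I+1)/(2I))·b| ≤ (1/2)·L_{fg}·(u−ℓ) when I is odd. -/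

import Mathlib

open Finset

/-- Uniform grid with `I` points on `[l, u]` (0-indexed): `t[i] = l + i·(u−l)/(I−1)`. -/
noncomputable def unifGrid (l u : ℝ) (I : ℕ) (i : ℕ) : ℝ := l + i * (u - l) / ((I : ℝ) - 1)

/-- Dyadic coarsening (0-indexed): `x̄[i] = x[2i]`. -/
def coarsen (x : ℕ → ℝ) (i : ℕ) : ℝ := x (2 * i)

lemma sum_range_two_mul' (y : ℕ → ℝ) (m : ℕ) :
    ∑ i ∈ range (2*m), y i = ∑ i ∈ range m, (y (2*i) + y (2*i+1)) := by
  induction m with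
  | zero => simp
  | succ n ih =>
    rw [show 2*(n+1) = 2*n+1+1 by ring, sum_range_succ, sum_range_succ, sum_range_succ, ih]
    rw [add_assoc]

lemma gauss_sum' (m : ℕ) : ∑ i ∈ range m, ((i:ℝ)) = m*(m-1)/2 := by
  induction m with
  | zero => simp
  | succ n ih => rw [sum_range_succ, ih]; push_cast; ring

/-- Single linear constraint scaling under dyadic coarsening. -/
theorem single_linear_constraint_scaling
    (l u : ℝ) (hlu : l < u) (I : ℕ) (hI : 2 ≤ I)
    (f g : ℝ → ℝ) (Lf Lg Mf Mg b : ℝ)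
    (hfLip : ∀ s ∈ Set.Icc l u, ∀ t ∈ Set.Icc l u, |f s - f t| ≤ Lf * |s - t|)
    (hgLip : ∀ s ∈ Set.Icc l u, ∀ t ∈ Set.Icc l u, |g s - g t| ≤ Lg * |s - t|)
    (hMf : ∀ t ∈ Set.Icc l u, |f t| ≤ Mf)
    (hMg : ∀ t ∈ Set.Icc l u, |g t| ≤ Mg)
    (a x : ℕ → ℝ)
    (ha : ∀ i < I, a i = g (unifGrid l u I i))
    (hx : ∀ i < I, x i = f (unifGrid l u I i))
    (hb : ∑ i ∈ range I, a i * x i = b) :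
    (Even I →
      |(∑ i ∈ range ((I + 1) / 2), coarsen a i * coarsen x i) - b / 2| ≤
        (1 / 4) * (Lf * Mg + Lg * Mf) * (u - l) * ((I : ℝ) / ((I : ℝ) - 1))) ∧
    (Odd I →
      |(∑ i ∈ range ((I + 1) / 2), coarsen a i * coarsen x i) - ((I : ℝ) + 1) / (2 * (I : ℝ)) * b| ≤
        (1 / 2) * (Lf * Mg + Lg * Mf) * (u - l)) := by
  have hI1 : (1:ℝ) ≤ (I:ℝ) - 1 := by
    have : (2:ℝ) ≤ (I:ℝ) := by exact_mod_cast hI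
    linarith
  set δ : ℝ := (u - l) / ((I:ℝ) - 1) with hδdef
  have hδpos : 0 < δ := div_pos (by linarith) (by linarith)
  set L : ℝ := Lf * Mg + Lg * Mf with hLdef
  have hlmem : l ∈ Set.Icc l u := ⟨le_refl _, hlu.le⟩
  have humem : u ∈ Set.Icc l u := ⟨hlu.le, le_refl _⟩
  have hMf0 : 0 ≤ Mf := le_trans (abs_nonneg _) (hMf l hlmem)
  have hMg0 : 0 ≤ Mg := le_trans (abs_nonneg _) (hMg l hlmem)
  have hLf0 : 0 ≤ Lf := by
    have h1 := hfLip l hlmem u humem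
    have h2 : |l - u| = u - l := by rw [abs_sub_comm, abs_of_pos (by linarith)]
    nlinarith [abs_nonneg (f l - f u)]
  have hLg0 : 0 ≤ Lg := by
    have h1 := hgLip l hlmem u humem
    have h2 : |l - u| = u - l := by rw [abs_sub_comm, abs_of_pos (by linarith)]
    nlinarith [abs_nonneg (g l - g u)]
  have hL0 : 0 ≤ L := by positivity
  have hul : u - l = ((I:ℝ) - 1) * δ := by
    rw [hδdef]; field_simp [show ((I:ℝ) - 1) ≠ 0 by linarith]
  have hgrid : ∀ i : ℕ, unifGrid l u I i = l + (i:ℝ) * δ := by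
    intro i; simp [unifGrid, hδdef, mul_div_assoc]
  have hmem : ∀ i < I, unifGrid l u I i ∈ Set.Icc l u := by
    intro i hi
    rw [hgrid i]
    constructor
    · nlinarith [Nat.cast_nonneg (α := ℝ) i]
    · have hile : (i:ℝ) ≤ (I:ℝ) - 1 := by
        have : (i:ℝ) + 1 ≤ (I:ℝ) := by exact_mod_cast hi
        linarith
      nlinarith
  set y : ℕ → ℝ := fun i => a i * x i with hydef
  have hkey : ∀ i j : ℕ, i < I → j < I → |y i - y j| ≤ L * (|(i:ℝ) - (j:ℝ)| * δ) := by
    intro i j hi hj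
    have hyi : y i = g (unifGrid l u I i) * f (unifGrid l u I i) := by
      simp [hydef, ha i hi, hx i hi]
    have hyj : y j = g (unifGrid l u I j) * f (unifGrid l u I j) := by
      simp [hydef, ha j hj, hx j hj]
    rw [hyi, hyj]
    set s := unifGrid l u I i with hs
    set t := unifGrid l u I j with ht
    have hsm : s ∈ Set.Icc l u := hmem i hi
    have htm : t ∈ Set.Icc l u := hmem j hj
    have hst : |s - t| = |(i:ℝ) - (j:ℝ)| * δ := by
      have h1 : s - t = ((i:ℝ) - (j:ℝ)) * δ := by
        rw [hs, ht, hgrid i, hgrid j]; ring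
      rw [h1, abs_mul, abs_of_pos hδpos]
    have h1 : g s * f s - g t * f t = g s * (f s - f t) + f t * (g s - g t) := by ring
    rw [h1]
    calc |g s * (f s - f t) + f t * (g s - g t)|
        ≤ |g s * (f s - f t)| + |f t * (g s - g t)| := abs_add_le _ _
      _ = |g s| * |f s - f t| + |f t| * |g s - g t| := by rw [abs_mul, abs_mul]
      _ ≤ Mg * (Lf * |s - t|) + Mf * (Lg * |s - t|) := by
          apply add_le_add
          · exact mul_le_mul (hMg s hsm) (hfLip s hsm t htm) (abs_nonneg _) hMg0
          · exact mul_le_mul (hMf t htm) (hgLip s hsm t htm) (abs_nonneg _) hMf0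
      _ = L * |s - t| := by rw [hLdef]; ring
      _ = L * (|(i:ℝ) - (j:ℝ)| * δ) := by rw [hst]
  have hcoarse : ∀ n : ℕ, ∑ i ∈ range n, coarsen a i * coarsen x i = ∑ i ∈ range n, y (2*i) := by
    intro n; apply Finset.sum_congr rfl; intro i _; simp [coarsen, hydef]
  constructor
  · -- Even case
    intro hEven
    obtain ⟨m, hm⟩ := hEven
    have hm2 : I = 2*m := by omega
    have hm1 : 1 ≤ m := by omega
    have hhalf : (I+1)/2 = m := by omega
    rw [hhalf, hcoarse m]
    set A : ℝ := ∑ i ∈ range m, y (2*i) with hA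
    set B : ℝ := ∑ i ∈ range m, y (2*i+1) with hB
    have hbval : A + B = b := by
      rw [← hb, hm2, sum_range_two_mul' y m, Finset.sum_add_distrib]
    have hAB : |A - B| ≤ (m:ℝ) * (L * δ) := by
      rw [hA, hB, ← Finset.sum_sub_distrib]
      calc |∑ i ∈ range m, (y (2*i) - y (2*i+1))|
          ≤ ∑ i ∈ range m, |y (2*i) - y (2*i+1)| := Finset.abs_sum_le_sum_abs _ _
        _ ≤ ∑ i ∈ range m, L * δ := by
            apply Finset.sum_le_sum
            intro i hi
            rw [Finset.mem_range] at hi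
            have h1 : 2*i < I := by omega
            have h2 : 2*i+1 < I := by omega
            have h3 := hkey (2*i) (2*i+1) h1 h2
            have h4 : |((2*i : ℕ):ℝ) - ((2*i+1 : ℕ):ℝ)| = 1 := by
              push_cast; rw [show ((2:ℝ)*i - (2*i+1)) = -1 by ring]; simp
            rw [h4] at h3; linarith [h3]
        _ = (m:ℝ) * (L * δ) := by rw [Finset.sum_const, card_range]; simp
    have hIcast : (I:ℝ) = 2*(m:ℝ) := by exact_mod_cast congrArg (Nat.cast (R := ℝ)) hm2
    have hrhs : (1 / 4) * L * (u - l) * ((I : ℝ) / ((I : ℝ) - 1)) = (m:ℝ) * (L * δ) / 2 := by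
      rw [hul, hIcast]
      have hne : (2*(m:ℝ) - 1) ≠ 0 := by
        have : (1:ℝ) ≤ (m:ℝ) := by exact_mod_cast hm1
        intro h; nlinarith
      field_simp
      ring
    rw [hrhs]
    have hgoal : A - b / 2 = (A - B) / 2 := by rw [← hbval]; ring
    rw [hgoal, abs_div, abs_of_pos (by norm_num : (0:ℝ) < 2)]
    gcongr
  · -- Odd case
    intro hOdd
    obtain ⟨m, hm⟩ := hOdd
    have hm2 : I = 2*m+1 := by omega
    have hm1 : 1 ≤ m := by omega
    have hhalf : (I+1)/2 = m+1 := by omega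
    rw [hhalf, hcoarse (m+1)]
    set A : ℝ := ∑ i ∈ range m, y (2*i) with hA
    set B : ℝ := ∑ i ∈ range m, y (2*i+1) with hB
    have hbval : A + B + y (2*m) = b := by
      rw [← hb, hm2, sum_range_succ, sum_range_two_mul' y m, Finset.sum_add_distrib]
    have hS : ∑ i ∈ range (m+1), y (2*i) = A + y (2*m) := by
      rw [sum_range_succ]
    have hIcast : (I:ℝ) = 2*(m:ℝ)+1 := by exact_mod_cast congrArg (Nat.cast (R := ℝ)) hm2
    have hIpos : (0:ℝ) < (I:ℝ) := by rw [hIcast]; positivity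
    -- the error term
    set E : ℝ := ∑ i ∈ range m, ((m:ℝ)*(y (2*i) - y (2*i+1)) + (y (2*m) - y (2*i+1))) with hEdef
    have hEval : E = (I:ℝ)*(A + y (2*m)) - ((m:ℝ)+1)*b := by
      rw [hEdef, Finset.sum_add_distrib, ← Finset.mul_sum, Finset.sum_sub_distrib,
        Finset.sum_sub_distrib, Finset.sum_const, card_range, ← hA, ← hB, ← hbval, hIcast]
      ring
    have hEbound : |E| ≤ 2 * (m:ℝ)^2 * (L * δ) := by
      have hterm : ∀ i ∈ range m,
          |(m:ℝ)*(y (2*i) - y (2*i+1)) + (y (2*m) - y (2*i+1))| ≤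
            (m:ℝ) * (L*δ) + L * ((2*(m:ℝ) - 2*(i:ℝ) - 1) * δ) := by
        intro i hi
        rw [Finset.mem_range] at hi
        have h1 : 2*i < I := by omega
        have h2 : 2*i+1 < I := by omega
        have h3 : 2*m < I := by omega
        have hk1 := hkey (2*i) (2*i+1) h1 h2
        have hk2 := hkey (2*m) (2*i+1) h3 h2
        have h4 : |((2*i : ℕ):ℝ) - ((2*i+1 : ℕ):ℝ)| = 1 := by
          push_cast; rw [show ((2:ℝ)*i - (2*i+1)) = -1 by ring]; simp
        have h5 : |((2*m : ℕ):ℝ) - ((2*i+1 : ℕ):ℝ)| = 2*(m:ℝ) - 2*(i:ℝ) - 1 := by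
          have hi' : (i:ℝ) + 1 ≤ (m:ℝ) := by exact_mod_cast hi
          push_cast
          rw [abs_of_nonneg (by linarith : (0:ℝ) ≤ 2*(m:ℝ) - (2*(i:ℝ)+1))]
          ring
        rw [h4] at hk1; rw [h5] at hk2
        calc |(m:ℝ)*(y (2*i) - y (2*i+1)) + (y (2*m) - y (2*i+1))|
            ≤ |(m:ℝ)*(y (2*i) - y (2*i+1))| + |y (2*m) - y (2*i+1)| := abs_add_le _ _
          _ = (m:ℝ) * |y (2*i) - y (2*i+1)| + |y (2*m) - y (2*i+1)| := by
              rw [abs_mul, abs_of_nonneg (Nat.cast_nonneg m)]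
          _ ≤ (m:ℝ) * (L * (1 * δ)) + L * ((2*(m:ℝ) - 2*(i:ℝ) - 1) * δ) := by
              apply add_le_add _ hk2
              exact mul_le_mul_of_nonneg_left hk1 (Nat.cast_nonneg m)
          _ = (m:ℝ) * (L*δ) + L * ((2*(m:ℝ) - 2*(i:ℝ) - 1) * δ) := by ring
      calc |E| ≤ ∑ i ∈ range m, |(m:ℝ)*(y (2*i) - y (2*i+1)) + (y (2*m) - y (2*i+1))| :=
            Finset.abs_sum_le_sum_abs _ _
        _ ≤ ∑ i ∈ range m, ((m:ℝ) * (L*δ) + L * ((2*(m:ℝ) - 2*(i:ℝ) - 1) * δ)) :=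
            Finset.sum_le_sum hterm
        _ = ∑ i ∈ range m, ((m:ℝ) * (L*δ)) + L*δ*∑ i ∈ range m, (2*(m:ℝ) - 2*(i:ℝ) - 1) := by
            rw [Finset.sum_add_distrib, Finset.mul_sum]
            congr 1
            apply Finset.sum_congr rfl; intro i _; ring
        _ = 2 * (m:ℝ)^2 * (L * δ) := by
            have hsum2 : ∑ i ∈ range m, (2*(m:ℝ) - 2*(i:ℝ) - 1) = (m:ℝ)^2 := by
              have h1 : ∀ i ∈ range m, (2*(m:ℝ) - 2*(i:ℝ) - 1) = (2*(m:ℝ) - 1) - 2*(i:ℝ) := by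
                intro i _; ring
              rw [Finset.sum_congr rfl h1, Finset.sum_sub_distrib, Finset.sum_const, card_range,
                ← Finset.mul_sum, gauss_sum' m, nsmul_eq_mul]
              ring
            rw [hsum2, Finset.sum_const, card_range, nsmul_eq_mul]
            ring
    -- convert goal
    have hgoal : (A + y (2*m)) - ((I:ℝ) + 1)/(2*(I:ℝ)) * b = E / (I:ℝ) := by
      rw [hEval, hIcast]
      field_simp
      ring
    rw [hS, hgoal, abs_div, abs_of_pos hIpos]
    rw [div_le_iff₀ hIpos]
    have hδ0 : 0 ≤ δ := hδpos.le
    have hulval : u - l = 2*(m:ℝ)*δ := by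
      rw [hul, hIcast]; ring
    rw [hulval, hIcast]
    have hnn : (0:ℝ) ≤ (m:ℝ) * (L*δ) := mul_nonneg (Nat.cast_nonneg m) (mul_nonneg hL0 hδ0)
    calc |E| ≤ 2 * (m:ℝ)^2 * (L * δ) := hEbound
      _ ≤ 1/2 * L * (2*(m:ℝ)*δ) * (2*(m:ℝ)+1) := by
          have hexp : 1/2 * L * (2*(m:ℝ)*δ) * (2*(m:ℝ)+1)
              = 2 * (m:ℝ)^2 * (L * δ) + (m:ℝ) * (L*δ) := by ring
          rw [hexp]
          linarith [hnn]
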